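/- arXiv:1906.00752 — 4 statements merged into one kernel-verified Lean document; each statement's English description precedes it below -/
import Mathlib

section
/- For the uniform binary case with n = 2\nu even, the probability generating function of S equals 2^{-2\nu} \prod_{k=1}^{\nu} (x^{2k-1} + 2 + x^{1-2k}). -/
open Finset

/-- Kendall score S = S⁺ - S⁻ of a finite sequence: S⁺ counts the pairs of positions in which
the earlier element exceeds the later one, S⁻ those in which the earlier element is smaller
(the paper's convention: S(0 1 1 2 0 2 1) = 5 - 11 = -6). -/
def kendallS {n : ℕ} {α : Type*} [LinearOrder α] (x : Fin n → α) : ℤ :=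
  ((Finset.univ.filter (fun p : Fin n × Fin n => p.2 < p.1 ∧ x p.1 < x p.2)).card : ℤ) -
  ((Finset.univ.filter (fun p : Fin n × Fin n => p.2 < p.1 ∧ x p.2 < x p.1)).card : ℤ)

/-- number of ones in a binary word -/
def onesCt {n : ℕ} (w : Fin n → Fin 2) : ℕ := ∑ i, if w i = 1 then 1 else 0

lemma kendallS_eq_sum {n : ℕ} {α : Type*} [LinearOrder α] (x : Fin n → α) :
    kendallS x = ∑ p : Fin n × Fin n,
      ((if p.2 < p.1 ∧ x p.1 < x p.2 then (1:ℤ) else 0) -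
       (if p.2 < p.1 ∧ x p.2 < x p.1 then (1:ℤ) else 0)) := by
  rw [Finset.sum_sub_distrib]
  simp only [kendallS, Finset.card_filter, Nat.cast_sum, apply_ite (Nat.cast : ℕ → ℤ),
    Nat.cast_one, Nat.cast_zero]

lemma kendallS_cons {n : ℕ} (a : Fin 2) (w : Fin n → Fin 2) :
    kendallS (Fin.cons a w) = kendallS w +
      ∑ i : Fin n, ((if w i < a then (1:ℤ) else 0) - (if a < w i then (1:ℤ) else 0)) := by
  rw [kendallS_eq_sum, kendallS_eq_sum (x := w), Fintype.sum_prod_type,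
    Fintype.sum_prod_type]
  simp only [Fin.sum_univ_succ, Fin.cons_zero, Fin.cons_succ, Fin.not_lt_zero, false_and,
    if_false, Fin.succ_pos, true_and, Fin.succ_lt_succ_iff, sub_zero, zero_sub,
    Finset.sum_sub_distrib, Finset.sum_add_distrib]
  ring

lemma onesCt_cons {n : ℕ} (a : Fin 2) (w : Fin n → Fin 2) :
    onesCt (Fin.cons a w) = (if a = 1 then 1 else 0) + onesCt w := by
  simp only [onesCt, Fin.sum_univ_succ, Fin.cons_zero, Fin.cons_succ]

lemma cons_diff_zero {n : ℕ} (w : Fin n → Fin 2) :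
    ∑ i : Fin n, ((if w i < (0:Fin 2) then (1:ℤ) else 0) - (if (0:Fin 2) < w i then (1:ℤ) else 0))
      = -(onesCt w : ℤ) := by
  rw [onesCt, Nat.cast_sum, ← Finset.sum_neg_distrib]
  refine Finset.sum_congr rfl fun i _ => ?_
  have h : ∀ v : Fin 2, ((if v < (0:Fin 2) then (1:ℤ) else 0) - (if (0:Fin 2) < v then (1:ℤ) else 0))
      = -((if v = 1 then (1:ℕ) else 0) : ℤ) := by decide
  exact_mod_cast h (w i)

lemma cons_diff_one {n : ℕ} (w : Fin n → Fin 2) :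
    ∑ i : Fin n, ((if w i < (1:Fin 2) then (1:ℤ) else 0) - (if (1:Fin 2) < w i then (1:ℤ) else 0))
      = (n : ℤ) - (onesCt w : ℤ) := by
  have h : ∀ v : Fin 2, ((if v < (1:Fin 2) then (1:ℤ) else 0) - (if (1:Fin 2) < v then (1:ℤ) else 0))
      = 1 - ((if v = 1 then (1:ℕ) else 0) : ℤ) := by decide
  rw [Finset.sum_congr rfl fun i _ => h (w i), Finset.sum_sub_distrib]
  simp [onesCt]

lemma key (x : ℝ) (hx : x ≠ 0) : ∀ (n : ℕ) (z : ℝ),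
    ∑ w : Fin n → Fin 2, x ^ kendallS w * z ^ onesCt w
      = ∏ i ∈ Finset.range n, (1 + z * x ^ ((n:ℤ) - 1 - 2*(i:ℤ))) := by
  intro n
  induction n with
  | zero =>
      intro z
      simp [kendallS, onesCt]
  | succ n ih =>
      intro z
      rw [← (Fin.consEquiv (fun _ : Fin (n+1) => Fin 2)).sum_comp
        (fun w => x ^ kendallS w * z ^ onesCt w)]
      rw [Fintype.sum_prod_type, Fin.sum_univ_two]
      simp only [Fin.consEquiv, Equiv.coe_fn_mk, kendallS_cons, onesCt_cons,
        cons_diff_zero, cons_diff_one]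
      norm_num
      have h0 : ∀ w : Fin n → Fin 2,
          x ^ (kendallS w + -(onesCt w : ℤ)) * z ^ onesCt w
            = x ^ kendallS w * (z / x) ^ onesCt w := by
        intro w
        rw [← sub_eq_add_neg, zpow_sub₀ hx, zpow_natCast, div_pow]
        ring
      have h1 : ∀ w : Fin n → Fin 2,
          x ^ (kendallS w + ((n : ℤ) - (onesCt w : ℤ))) * z ^ (1 + onesCt w)
            = (z * x ^ (n : ℤ)) * (x ^ kendallS w * (z / x) ^ onesCt w) := by
        intro w
        rw [zpow_add₀ hx, zpow_sub₀ hx, zpow_natCast, pow_add, pow_one, div_pow]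
        have hxn : (x : ℝ) ^ onesCt w ≠ 0 := pow_ne_zero _ hx
        field_simp
        rw [zpow_natCast]
        ring
      rw [Finset.sum_congr rfl fun w _ => h0 w, Finset.sum_congr rfl fun w _ => h1 w,
        ← Finset.mul_sum, ih (z / x), Finset.prod_range_succ']
      have he : ∀ i : ℕ, (1 + z * x ^ ((n:ℤ) - 2*((i+1:ℕ):ℤ)))
          = 1 + z / x * x ^ ((n:ℤ) - 1 - 2*(i:ℤ)) := by
        intro i
        congr 1
        have h3 : ((n:ℤ) - 2*((i+1:ℕ):ℤ)) = ((n:ℤ) - 1 - 2*(i:ℤ)) - 1 := by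
          push_cast; ring
        rw [h3, zpow_sub_one₀ hx]
        ring
      rw [Finset.prod_congr rfl fun i _ => he i]
      have h2 : (1:ℝ) + z * x ^ ((n:ℤ) - 2*((0:ℕ):ℤ)) = 1 + z * x ^ (n:ℤ) := by
        norm_num
      rw [h2]
      ring

/-- PGF of S for n = 2ν fair coin flips: f(x) = 2^{-2ν} ∏ₖ (x^{2k-1} + 2 + x^{1-2k}). -/
theorem kendall_pgf_even (ν : ℕ) (x : ℝ) (hx : x ≠ 0) :
    ∑ j : Fin (2 * ν) → Fin 2, (1 / 2 ^ (2 * ν) : ℝ) * x ^ kendallS j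
      = (2 : ℝ) ^ (-(2 * ν : ℤ))
        * ∏ k ∈ Finset.Icc 1 ν,
            (x ^ (2 * (k : ℤ) - 1) + 2 + x ^ (1 - 2 * (k : ℤ))) := by
  have hsum : ∑ j : Fin (2 * ν) → Fin 2, (x : ℝ) ^ kendallS j
      = ∏ i ∈ Finset.range (2*ν), (1 + x ^ (2*(ν:ℤ) - 1 - 2*(i:ℤ))) := by
    have h := key x hx (2*ν) 1
    simp only [one_pow, mul_one, one_mul] at h
    rw [h]
    refine Finset.prod_congr rfl fun i _ => ?_
    push_cast
    try ring
  have hpair : ∀ k : ℤ, (1 + x ^ (2*k-1)) * (1 + x ^ (1-2*k))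
      = x ^ (2 * k - 1) + 2 + x ^ (1 - 2 * k) := by
    intro k
    have h : x ^ (2*k-1) * x ^ (1-2*k) = 1 := by
      rw [← zpow_add₀ hx]; norm_num
    ring_nf
    ring_nf at h
    rw [h]
    ring
  have hsplit : ∏ i ∈ Finset.range (2*ν), (1 + x ^ (2*(ν:ℤ) - 1 - 2*(i:ℤ)))
      = (∏ i ∈ Finset.range ν, (1 + x ^ (2*(ν:ℤ) - 1 - 2*(i:ℤ))))
        * ∏ i ∈ Finset.range ν, (1 + x ^ (2*(ν:ℤ) - 1 - 2*((ν+i:ℕ):ℤ))) := by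
    rw [show 2*ν = ν+ν from by ring]
    exact Finset.prod_range_add (fun i => (1 + x ^ (2*(ν:ℤ) - 1 - 2*(i:ℤ)))) ν ν
  have hA : ∏ i ∈ Finset.range ν, (1 + x ^ (2*(ν:ℤ) - 1 - 2*(i:ℤ)))
      = ∏ i ∈ Finset.range ν, (1 + x ^ (2*(i:ℤ)+1)) := by
    rw [← Finset.prod_range_reflect (fun j => 1 + x ^ (2*(j:ℤ)+1)) ν]
    refine Finset.prod_congr rfl fun i hi => ?_
    rw [Finset.mem_range] at hi
    congr 2
    omega
  have hB : ∏ i ∈ Finset.range ν, (1 + x ^ (2*(ν:ℤ) - 1 - 2*((ν+i:ℕ):ℤ)))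
      = ∏ i ∈ Finset.range ν, (1 + x ^ (1 - 2*((1+i:ℕ):ℤ))) := by
    refine Finset.prod_congr rfl fun i _ => ?_
    congr 2
    omega
  have hRHS : ∏ k ∈ Finset.Icc 1 ν, (x ^ (2 * (k : ℤ) - 1) + 2 + x ^ (1 - 2 * (k : ℤ)))
      = ∏ i ∈ Finset.range ν,
          (x ^ (2 * ((1+i:ℕ) : ℤ) - 1) + 2 + x ^ (1 - 2 * ((1+i:ℕ) : ℤ))) := by
    rw [← Finset.Ico_add_one_right_eq_Icc,
      Finset.prod_Ico_eq_prod_range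
        (fun k => (x ^ (2 * (k : ℤ) - 1) + 2 + x ^ (1 - 2 * (k : ℤ)))) 1 (ν+1)]
    simp
  have hprod : ∏ i ∈ Finset.range (2*ν), (1 + x ^ (2*(ν:ℤ) - 1 - 2*(i:ℤ)))
      = ∏ k ∈ Finset.Icc 1 ν, (x ^ (2 * (k : ℤ) - 1) + 2 + x ^ (1 - 2 * (k : ℤ))) := by
    rw [hsplit, hA, hB, hRHS, ← Finset.prod_mul_distrib]
    refine Finset.prod_congr rfl fun i _ => ?_
    rw [← hpair ((1+i:ℕ) : ℤ)]
    congr 3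
    omega
  calc ∑ j : Fin (2 * ν) → Fin 2, (1 / 2 ^ (2 * ν) : ℝ) * x ^ kendallS j
      = (1 / 2 ^ (2 * ν) : ℝ) * ∑ j : Fin (2 * ν) → Fin 2, x ^ kendallS j := by
        rw [Finset.mul_sum]
    _ = (2 : ℝ) ^ (-(2 * ν : ℤ)) * ∏ k ∈ Finset.Icc 1 ν,
          (x ^ (2 * (k : ℤ) - 1) + 2 + x ^ (1 - 2 * (k : ℤ))) := by
        rw [hsum, hprod]
        congr 1
        rw [zpow_neg, ← zpow_natCast (2:ℝ) (2*ν)]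
        push_cast
        rw [one_div]
end

section
/- In the binary case \ell = 2 with i.i.d. fair coin flips, the variance of S equals n(n^2 - 1)/12. -/
open Finset

namespace KendallAux

lemma kendall_eq_sum {n : ℕ} (x : Fin n → Fin 2) :
    kendallS x = ∑ p ∈ univ.filter (fun p : Fin n × Fin n => p.2 < p.1),
      (((x p.2 : ℕ) : ℤ) - ((x p.1 : ℕ) : ℤ)) := by
  unfold kendallS
  rw [← Finset.filter_filter (fun p : Fin n × Fin n => p.2 < p.1) (fun p => x p.1 < x p.2),
      ← Finset.filter_filter (fun p : Fin n × Fin n => p.2 < p.1) (fun p => x p.2 < x p.1),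
      Finset.card_filter, Finset.card_filter]
  push_cast
  rw [← Finset.sum_sub_distrib]
  refine Finset.sum_congr rfl fun p _ => ?_
  generalize x p.1 = a; generalize x p.2 = b
  fin_cases a <;> fin_cases b <;> simp

lemma sumT2 {n : ℕ} (f : Fin n → ℤ) :
    ∑ p ∈ univ.filter (fun p : Fin n × Fin n => p.2 < p.1), f p.2
      = ∑ j : Fin n, ((n : ℤ) - 1 - (j : ℕ)) * f j := by
  rw [Finset.sum_filter, Fintype.sum_prod_type, Finset.sum_comm]
  refine Finset.sum_congr rfl fun j _ => ?_
  rw [← Finset.sum_filter]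
  have h : univ.filter (fun i : Fin n => j < i) = Ioi j := by ext i; simp
  rw [h]
  simp only [Finset.sum_const, Fin.card_Ioi, nsmul_eq_mul]
  congr 1
  have := j.isLt
  omega

lemma sumT1 {n : ℕ} (f : Fin n → ℤ) :
    ∑ p ∈ univ.filter (fun p : Fin n × Fin n => p.2 < p.1), f p.1
      = ∑ i : Fin n, ((i : ℕ) : ℤ) * f i := by
  rw [Finset.sum_filter, Fintype.sum_prod_type]
  refine Finset.sum_congr rfl fun i _ => ?_
  rw [← Finset.sum_filter]
  have h : univ.filter (fun j : Fin n => j < i) = Iio i := by ext j; simp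
  rw [h]
  simp only [Finset.sum_const, Fin.card_Iio, nsmul_eq_mul]

lemma kendall_linear {n : ℕ} (x : Fin n → Fin 2) :
    (kendallS x : ℚ) = ∑ k : Fin n, ((n : ℚ) - 1 - 2 * (k : ℕ)) * ((x k : ℕ) : ℚ) := by
  have h := kendall_eq_sum x
  rw [Finset.sum_sub_distrib, sumT2 (fun j => ((x j : ℕ) : ℤ)),
      sumT1 (fun j => ((x j : ℕ) : ℤ)), ← Finset.sum_sub_distrib] at h
  have h2 : kendallS x = ∑ k : Fin n, ((n : ℤ) - 1 - 2 * (k : ℕ)) * ((x k : ℕ) : ℤ) := by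
    rw [h]; exact Finset.sum_congr rfl fun k _ => by ring
  rw [h2]
  push_cast
  rfl

lemma sum_coord {n : ℕ} (k : Fin n) :
    ∑ x : Fin n → Fin 2, ((x k : ℕ) : ℚ) = 2 ^ (n - 1) := by
  have h := Fintype.prod_sum (fun (i : Fin n) (b : Fin 2) => if i = k then ((b : ℕ) : ℚ) else 1)
  have hR : ∀ x : Fin n → Fin 2,
      (∏ i, if i = k then ((x i : ℕ) : ℚ) else 1) = ((x k : ℕ) : ℚ) := by
    intro x
    rw [Finset.prod_ite_eq' univ k (fun i => ((x i : ℕ) : ℚ))]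
    simp
  have hL : (∏ i : Fin n, ∑ b : Fin 2, if i = k then ((b : ℕ) : ℚ) else 1) = 2 ^ (n - 1) := by
    have h1 : ∀ i : Fin n, (∑ b : Fin 2, if i = k then ((b : ℕ) : ℚ) else 1)
        = if i = k then 1 else 2 := by
      intro i; by_cases hik : i = k <;> simp [hik, Fin.sum_univ_two]
    rw [Finset.prod_congr rfl fun i _ => h1 i,
        ← Finset.mul_prod_erase univ _ (Finset.mem_univ k), if_pos rfl, one_mul,
        Finset.prod_congr rfl fun i hi => if_neg (Finset.ne_of_mem_erase hi),
        Finset.prod_const, Finset.card_erase_of_mem (Finset.mem_univ k),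
        Finset.card_univ, Fintype.card_fin]
  calc ∑ x : Fin n → Fin 2, ((x k : ℕ) : ℚ)
      = ∑ x : Fin n → Fin 2, ∏ i, (if i = k then ((x i : ℕ) : ℚ) else 1) :=
        Finset.sum_congr rfl fun x _ => (hR x).symm
    _ = 2 ^ (n - 1) := by rw [← h, hL]

lemma sum_coord_mul {n : ℕ} (k l : Fin n) (hkl : k ≠ l) :
    ∑ x : Fin n → Fin 2, ((x k : ℕ) : ℚ) * ((x l : ℕ) : ℚ) = 2 ^ (n - 2) := by
  have h := Fintype.prod_sum (fun (i : Fin n) (b : Fin 2) =>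
    (if i = k then ((b : ℕ) : ℚ) else 1) * (if i = l then ((b : ℕ) : ℚ) else 1))
  have hR : ∀ x : Fin n → Fin 2,
      (∏ i, (if i = k then ((x i : ℕ) : ℚ) else 1) * (if i = l then ((x i : ℕ) : ℚ) else 1))
        = ((x k : ℕ) : ℚ) * ((x l : ℕ) : ℚ) := by
    intro x
    rw [Finset.prod_mul_distrib,
        Finset.prod_ite_eq' univ k (fun i => ((x i : ℕ) : ℚ)),
        Finset.prod_ite_eq' univ l (fun i => ((x i : ℕ) : ℚ))]
    simp
  have hL : (∏ i : Fin n, ∑ b : Fin 2,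
      (if i = k then ((b : ℕ) : ℚ) else 1) * (if i = l then ((b : ℕ) : ℚ) else 1))
        = 2 ^ (n - 2) := by
    have h1 : ∀ i : Fin n, (∑ b : Fin 2,
        (if i = k then ((b : ℕ) : ℚ) else 1) * (if i = l then ((b : ℕ) : ℚ) else 1))
        = if i = k ∨ i = l then 1 else 2 := by
      intro i
      by_cases hik : i = k
      · subst hik
        simp [if_neg hkl, Fin.sum_univ_two]
      · by_cases hil : i = l <;> simp [hik, hil, Fin.sum_univ_two]
    rw [Finset.prod_congr rfl fun i _ => h1 i]
    have hlk : l ∈ univ.erase k := Finset.mem_erase.mpr ⟨hkl.symm, Finset.mem_univ l⟩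
    rw [← Finset.mul_prod_erase univ _ (Finset.mem_univ k), if_pos (Or.inl rfl), one_mul,
        ← Finset.mul_prod_erase _ _ hlk, if_pos (Or.inr rfl), one_mul]
    have h2 : ∀ i ∈ (univ.erase k).erase l,
        (if i = k ∨ i = l then (1 : ℚ) else 2) = 2 := by
      intro i hi
      have h3 := Finset.mem_erase.mp hi
      have h4 := Finset.mem_erase.mp h3.2
      rw [if_neg]
      push_neg
      exact ⟨h4.1, h3.1⟩
    rw [Finset.prod_congr rfl h2, Finset.prod_const,
        Finset.card_erase_of_mem hlk, Finset.card_erase_of_mem (Finset.mem_univ k),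
        Finset.card_univ, Fintype.card_fin, Nat.sub_sub]
  calc ∑ x : Fin n → Fin 2, ((x k : ℕ) : ℚ) * ((x l : ℕ) : ℚ)
      = ∑ x : Fin n → Fin 2, ∏ i,
          (if i = k then ((x i : ℕ) : ℚ) else 1) * (if i = l then ((x i : ℕ) : ℚ) else 1) :=
        Finset.sum_congr rfl fun x _ => (hR x).symm
    _ = 2 ^ (n - 2) := by rw [← h, hL]

lemma sum_range_id_q (n : ℕ) : ∑ i ∈ range n, (i : ℚ) = n * (n - 1) / 2 := by
  induction n with
  | zero => simp
  | succ m ih => rw [Finset.sum_range_succ, ih]; push_cast; ring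

lemma sum_range_sq_q (n : ℕ) :
    ∑ i ∈ range n, (i : ℚ) ^ 2 = n * (n - 1) * (2 * n - 1) / 6 := by
  induction n with
  | zero => simp
  | succ m ih => rw [Finset.sum_range_succ, ih]; push_cast; ring

lemma sum_c (n : ℕ) : ∑ i ∈ range n, ((n : ℚ) - 1 - 2 * i) = 0 := by
  have h1 := sum_range_id_q n
  have e : ∀ i ∈ range n, ((n : ℚ) - 1 - 2 * i) = ((n : ℚ) - 1) + (-2) * (i : ℚ) := by
    intros; ring
  rw [Finset.sum_congr rfl e, Finset.sum_add_distrib, Finset.sum_const, ← Finset.mul_sum, h1,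
      Finset.card_range]
  ring

lemma sum_c_sq (n : ℕ) :
    ∑ i ∈ range n, ((n : ℚ) - 1 - 2 * i) ^ 2 = n * ((n : ℚ) ^ 2 - 1) / 3 := by
  have h1 := sum_range_id_q n
  have h2 := sum_range_sq_q n
  have e : ∀ i ∈ range n, ((n : ℚ) - 1 - 2 * i) ^ 2
      = ((n : ℚ) - 1) ^ 2 + ((-(4 * ((n : ℚ) - 1))) * i + 4 * (i : ℚ) ^ 2) := by
    intros; ring
  rw [Finset.sum_congr rfl e, Finset.sum_add_distrib, Finset.sum_add_distrib,
      Finset.sum_const, ← Finset.mul_sum, ← Finset.mul_sum, h1, h2, Finset.card_range]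
  ring

lemma coe_sq (a : Fin 2) : ((a : ℕ) : ℚ) * ((a : ℕ) : ℚ) = ((a : ℕ) : ℚ) := by
  fin_cases a <;> norm_num

lemma kendall_small {n : ℕ} (hn : n ≤ 1) (x : Fin n → Fin 2) : kendallS x = 0 := by
  have h : ∀ p : Fin n × Fin n, ¬ p.2 < p.1 := by
    intro p hp
    have h1 := p.1.isLt
    have h2 := p.2.isLt
    rw [Fin.lt_def] at hp
    omega
  unfold kendallS
  rw [Finset.filter_eq_empty_iff.mpr fun p _ hq => h p hq.1,
      Finset.filter_eq_empty_iff.mpr fun p _ hq => h p hq.1]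
  simp

lemma fin_sum_c (n : ℕ) : ∑ k : Fin n, ((n : ℚ) - 1 - 2 * (k : ℕ)) = 0 := by
  rw [Fin.sum_univ_eq_sum_range (fun i => ((n : ℚ) - 1 - 2 * i)) n]
  exact sum_c n

lemma fin_sum_c_sq (n : ℕ) :
    ∑ k : Fin n, ((n : ℚ) - 1 - 2 * (k : ℕ)) ^ 2 = n * ((n : ℚ) ^ 2 - 1) / 3 := by
  rw [Fin.sum_univ_eq_sum_range (fun i => ((n : ℚ) - 1 - 2 * i) ^ 2) n]
  exact sum_c_sq n

end KendallAux

open KendallAux in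
/-- Binary uniform case: Var(S) = n(n²-1)/12. -/
theorem kendall_variance_binary (n : ℕ) :
    (∑ x : Fin n → Fin 2, (kendallS x : ℚ) ^ 2) / 2 ^ n
      - ((∑ x : Fin n → Fin 2, (kendallS x : ℚ)) / 2 ^ n) ^ 2
    = (n : ℚ) * ((n : ℚ) ^ 2 - 1) / 12 := by
  obtain _ | _ | m := n
  · have h0 : ∀ x : Fin 0 → Fin 2, kendallS x = 0 := kendall_small (by norm_num)
    simp [h0]
  · have h0 : ∀ x : Fin 1 → Fin 2, kendallS x = 0 := kendall_small (le_refl 1)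
    simp [h0]
  · set N := m + 1 + 1 with hN
    have hE : ∀ k l : Fin N, ∑ x : Fin N → Fin 2, ((x k : ℕ) : ℚ) * ((x l : ℕ) : ℚ)
        = 2 ^ m + (if k = l then (2 : ℚ) ^ m else 0) := by
      intro k l
      by_cases hkl : k = l
      · subst hkl
        rw [Finset.sum_congr rfl fun x _ => coe_sq (x k), sum_coord k, if_pos rfl]
        have : N - 1 = m + 1 := rfl
        rw [this]
        ring
      · rw [sum_coord_mul k l hkl, if_neg hkl]
        have : N - 2 = m := rfl
        rw [this]
        ring
    have hS1 : ∑ x : Fin N → Fin 2, (kendallS x : ℚ) = 0 := by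
      rw [Finset.sum_congr rfl fun x _ => kendall_linear x, Finset.sum_comm]
      have h1 : ∀ k : Fin N,
          ∑ x : Fin N → Fin 2, ((N : ℚ) - 1 - 2 * (k : ℕ)) * ((x k : ℕ) : ℚ)
          = ((N : ℚ) - 1 - 2 * (k : ℕ)) * 2 ^ (N - 1) := by
        intro k
        rw [← Finset.mul_sum, sum_coord]
      rw [Finset.sum_congr rfl fun k _ => h1 k, ← Finset.sum_mul, fin_sum_c, zero_mul]
    have hS2 : ∑ x : Fin N → Fin 2, (kendallS x : ℚ) ^ 2
        = 2 ^ m * ((N : ℚ) * ((N : ℚ) ^ 2 - 1) / 3) := by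
      have step1 : ∀ x : Fin N → Fin 2, (kendallS x : ℚ) ^ 2
          = ∑ k : Fin N, ∑ l : Fin N,
              (((N : ℚ) - 1 - 2 * (k : ℕ)) * ((N : ℚ) - 1 - 2 * (l : ℕ)))
                * (((x k : ℕ) : ℚ) * ((x l : ℕ) : ℚ)) := by
        intro x
        rw [sq, kendall_linear x, Finset.sum_mul_sum]
        exact Finset.sum_congr rfl fun k _ => Finset.sum_congr rfl fun l _ => by ring
      rw [Finset.sum_congr rfl fun x _ => step1 x, Finset.sum_comm]
      have step2 : ∀ k : Fin N,
          (∑ x : Fin N → Fin 2, ∑ l : Fin N,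
            (((N : ℚ) - 1 - 2 * (k : ℕ)) * ((N : ℚ) - 1 - 2 * (l : ℕ)))
              * (((x k : ℕ) : ℚ) * ((x l : ℕ) : ℚ)))
          = ∑ l : Fin N,
              (((N : ℚ) - 1 - 2 * (k : ℕ)) * ((N : ℚ) - 1 - 2 * (l : ℕ)))
                * (2 ^ m + (if k = l then (2 : ℚ) ^ m else 0)) := by
        intro k
        rw [Finset.sum_comm]
        exact Finset.sum_congr rfl fun l _ => by rw [← Finset.mul_sum, hE k l]
      rw [Finset.sum_congr rfl fun k _ => step2 k]
      have step3 : ∀ k : Fin N, ∑ l : Fin N,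
          (((N : ℚ) - 1 - 2 * (k : ℕ)) * ((N : ℚ) - 1 - 2 * (l : ℕ)))
            * (2 ^ m + (if k = l then (2 : ℚ) ^ m else 0))
          = ((N : ℚ) - 1 - 2 * (k : ℕ)) * (∑ l : Fin N, ((N : ℚ) - 1 - 2 * (l : ℕ))) * 2 ^ m
            + ((N : ℚ) - 1 - 2 * (k : ℕ)) ^ 2 * 2 ^ m := by
        intro k
        have e : ∀ l : Fin N,
            (((N : ℚ) - 1 - 2 * (k : ℕ)) * ((N : ℚ) - 1 - 2 * (l : ℕ)))
              * (2 ^ m + (if k = l then (2 : ℚ) ^ m else 0))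
            = ((N : ℚ) - 1 - 2 * (k : ℕ)) * ((N : ℚ) - 1 - 2 * (l : ℕ)) * 2 ^ m
              + (if k = l then
                  ((N : ℚ) - 1 - 2 * (k : ℕ)) * ((N : ℚ) - 1 - 2 * (l : ℕ)) * 2 ^ m else 0) := by
          intro l
          by_cases hkl : k = l <;> simp [hkl] <;> ring
        rw [Finset.sum_congr rfl fun l _ => e l, Finset.sum_add_distrib,
            Finset.sum_ite_eq univ k
              (fun l => ((N : ℚ) - 1 - 2 * (k : ℕ)) * ((N : ℚ) - 1 - 2 * (l : ℕ)) * 2 ^ m),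
            if_pos (Finset.mem_univ k)]
        rw [← Finset.sum_mul, ← Finset.mul_sum]
        ring
      rw [Finset.sum_congr rfl fun k _ => step3 k, Finset.sum_add_distrib, fin_sum_c]
      simp only [mul_zero, zero_mul, Finset.sum_const_zero, zero_add]
      rw [← Finset.sum_mul, fin_sum_c_sq]
      ring
    rw [hS1, hS2]
    have hp : (2 : ℚ) ^ N = 2 ^ m * 4 := by
      rw [hN, pow_add, pow_add]; ring
    rw [hp]
    have h2m : (2 : ℚ) ^ m ≠ 0 := pow_ne_zero m two_ne_zero
    field_simp
    ring
end

section
/- In the binary case \ell = 2 with i.i.d. fair coin flips, \mu_4(n)/\sigma(n)^4 \to 3 as n \to \infty, where \sigma^2(n) = Var(S) and \mu_4(n) = E[S^4]. -/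
open Finset

section Aux

lemma sum_ite_lt' {n : ℕ} (i : Fin n) (c : ℤ) :
    ∑ j : Fin n, (if j < i then c else 0) = (i : ℤ) * c := by
  rw [← Finset.sum_filter]
  have : (univ.filter (fun j : Fin n => j < i)) = Finset.Iio i := by ext j; simp
  rw [this, Finset.sum_const, Fin.card_Iio, nsmul_eq_mul]

lemma sum_ite_gt' {n : ℕ} (j : Fin n) (c : ℤ) :
    ∑ i : Fin n, (if j < i then c else 0) = ((n : ℤ) - 1 - (j : ℤ)) * c := by
  rw [← Finset.sum_filter]
  have : (univ.filter (fun i : Fin n => j < i)) = Finset.Ioi j := by ext i; simp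
  rw [this, Finset.sum_const, Fin.card_Ioi, nsmul_eq_mul]
  have := j.isLt
  congr 1
  omega

lemma kendall_pairs {n : ℕ} (x : Fin n → Fin 2) :
    kendallS x = ∑ p : Fin n × Fin n,
      (if p.2 < p.1 then ((x p.2 : ℤ) - (x p.1 : ℤ)) else 0) := by
  unfold kendallS
  rw [Finset.card_filter, Finset.card_filter]
  push_cast
  rw [← Finset.sum_sub_distrib]
  refine Finset.sum_congr rfl fun p _ => ?_
  obtain ⟨i, j⟩ := p
  simp only
  have hi := (x i).isLt
  have hj := (x j).isLt
  by_cases h : j < i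
  · simp only [h, true_and, if_true, Fin.lt_def]
    split_ifs <;> omega
  · simp [h]

lemma kendall_linear {n : ℕ} (x : Fin n → Fin 2) :
    kendallS x = ∑ k : Fin n, ((n:ℤ) - 1 - 2*(k:ℤ)) * (x k : ℤ) := by
  rw [kendall_pairs, Fintype.sum_prod_type]
  have step : ∀ i : Fin n, ∑ j : Fin n, (if j < i then ((x j : ℤ) - (x i : ℤ)) else 0)
      = (∑ j : Fin n, if j < i then (x j : ℤ) else 0) - (i : ℤ) * (x i : ℤ) := by
    intro i
    rw [← sum_ite_lt' i ((x i : ℤ)), ← Finset.sum_sub_distrib]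
    refine Finset.sum_congr rfl fun j _ => ?_
    split_ifs <;> ring
  simp only [step]
  rw [Finset.sum_sub_distrib, Finset.sum_comm]
  simp only [fun j : Fin n => sum_ite_gt' j ((x j : ℤ))]
  rw [← Finset.sum_sub_distrib]
  refine Finset.sum_congr rfl fun k _ => ?_
  ring

noncomputable def epsR (b : Fin 2) : ℝ := 2 * ((b : ℕ) : ℝ) - 1

lemma epsR_zero : epsR 0 = -1 := by norm_num [epsR]
lemma epsR_one : epsR 1 = 1 := by norm_num [epsR]

lemma rad_moments : ∀ (n : ℕ) (c : Fin n → ℝ),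
    (∑ x : Fin n → Fin 2, ∑ k, c k * epsR (x k)) = 0 ∧
    (∑ x : Fin n → Fin 2, (∑ k, c k * epsR (x k)) ^ 2) = 2 ^ n * (∑ k, (c k) ^ 2) ∧
    (∑ x : Fin n → Fin 2, (∑ k, c k * epsR (x k)) ^ 4)
      = 2 ^ n * (3 * (∑ k, (c k) ^ 2) ^ 2 - 2 * ∑ k, (c k) ^ 4) := by
  intro n
  induction n with
  | zero =>
      intro c
      simp
  | succ n ih =>
      intro c
      obtain ⟨h1, h2, h4⟩ := ih (fun k => c k.succ)
      have hsplit : ∀ f : (Fin (n+1) → Fin 2) → ℝ,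
          ∑ x : Fin (n+1) → Fin 2, f x
            = ∑ y : Fin n → Fin 2,
                (f (Fin.cons (α := fun _ => Fin 2) 0 y)
                  + f (Fin.cons (α := fun _ => Fin 2) 1 y)) := by
        intro f
        rw [← Equiv.sum_comp (Fin.consEquiv (fun _ => Fin 2)) f, Fintype.sum_prod_type,
          Fin.sum_univ_two, ← Finset.sum_add_distrib]
        simp [Fin.consEquiv]
      have hcons : ∀ (b : Fin 2) (y : Fin n → Fin 2),
          (∑ k, c k * epsR (Fin.cons (α := fun _ => Fin 2) b y k))
            = c 0 * epsR b + ∑ k : Fin n, c k.succ * epsR (y k) := by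
        intro b y
        rw [Fin.sum_univ_succ]
        simp
      have hcard : (univ : Finset (Fin n → Fin 2)).card = 2 ^ n := by
        simp [Fintype.card_fun]
      have hc2 : (∑ k : Fin (n+1), (c k) ^ 2) = (c 0) ^ 2 + ∑ k : Fin n, (c k.succ) ^ 2 :=
        Fin.sum_univ_succ _
      have hc4 : (∑ k : Fin (n+1), (c k) ^ 4) = (c 0) ^ 4 + ∑ k : Fin n, (c k.succ) ^ 4 :=
        Fin.sum_univ_succ _
      refine ⟨?_, ?_, ?_⟩
      · rw [hsplit]
        simp only [hcons, epsR_zero, epsR_one]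
        have : ∀ y : Fin n → Fin 2,
            (c 0 * (-1) + ∑ k : Fin n, c k.succ * epsR (y k))
              + (c 0 * 1 + ∑ k : Fin n, c k.succ * epsR (y k))
            = 2 * (∑ k : Fin n, c k.succ * epsR (y k)) := fun y => by ring
        simp only [this, ← Finset.mul_sum, h1, mul_zero]
      · rw [hsplit]
        simp only [hcons, epsR_zero, epsR_one]
        have : ∀ y : Fin n → Fin 2,
            (c 0 * (-1) + ∑ k : Fin n, c k.succ * epsR (y k)) ^ 2
              + (c 0 * 1 + ∑ k : Fin n, c k.succ * epsR (y k)) ^ 2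
            = 2 * (∑ k : Fin n, c k.succ * epsR (y k)) ^ 2 + 2 * (c 0) ^ 2 := fun y => by ring
        simp only [this]
        rw [Finset.sum_add_distrib, ← Finset.mul_sum, h2, Finset.sum_const, hcard,
          nsmul_eq_mul, hc2]
        push_cast
        ring
      · rw [hsplit]
        simp only [hcons, epsR_zero, epsR_one]
        have : ∀ y : Fin n → Fin 2,
            (c 0 * (-1) + ∑ k : Fin n, c k.succ * epsR (y k)) ^ 4
              + (c 0 * 1 + ∑ k : Fin n, c k.succ * epsR (y k)) ^ 4
            = 2 * (∑ k : Fin n, c k.succ * epsR (y k)) ^ 4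
              + 12 * (c 0) ^ 2 * (∑ k : Fin n, c k.succ * epsR (y k)) ^ 2
              + 2 * (c 0) ^ 4 := fun y => by ring
        simp only [this]
        rw [Finset.sum_add_distrib, Finset.sum_add_distrib, ← Finset.mul_sum, h4,
          ← Finset.mul_sum, h2, Finset.sum_const, hcard, nsmul_eq_mul, hc2, hc4]
        push_cast
        ring

lemma q1 (n : ℕ) : ∑ k ∈ range n, (k:ℝ) = n*(n-1)/2 := by
  induction n with
  | zero => simp
  | succ n ih => rw [Finset.sum_range_succ, ih]; push_cast; ring

lemma q2 (n : ℕ) : ∑ k ∈ range n, (k:ℝ)^2 = n*(n-1)*(2*n-1)/6 := by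
  induction n with
  | zero => simp
  | succ n ih => rw [Finset.sum_range_succ, ih]; push_cast; ring

lemma csum_zero (n : ℕ) : ∑ k ∈ range n, ((n:ℝ)-1-2*k) = 0 := by
  rw [Finset.sum_sub_distrib, Finset.sum_const, card_range, ← Finset.mul_sum, q1]
  ring

lemma sigma2_eq (n : ℕ) : ∑ k ∈ range n, ((n:ℝ)-1-2*k)^2 = (n:ℝ)*((n:ℝ)^2-1)/3 := by
  have e : ∀ k : ℕ, ((n:ℝ)-1-2*k)^2 = ((n:ℝ)-1)^2 - 4*((n:ℝ)-1)*k + 4*(k:ℝ)^2 := by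
    intro k; ring
  simp only [e]
  rw [Finset.sum_add_distrib, Finset.sum_sub_distrib, Finset.sum_const, card_range,
    ← Finset.mul_sum, ← Finset.mul_sum, q1, q2]
  ring

lemma sigma4_le (n : ℕ) :
    ∑ k ∈ range n, ((n:ℝ)-1-2*k)^4 ≤ ((n:ℝ)-1)^2 * ∑ k ∈ range n, ((n:ℝ)-1-2*k)^2 := by
  rw [Finset.mul_sum]
  refine Finset.sum_le_sum fun k hk => ?_
  have hk' : (k:ℝ) ≤ (n:ℝ) - 1 := by
    have := Finset.mem_range.mp hk
    have : (k:ℝ) + 1 ≤ n := by exact_mod_cast this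
    linarith
  have hk0 : (0:ℝ) ≤ k := Nat.cast_nonneg k
  nlinarith [mul_nonneg (mul_nonneg hk0 (by linarith : (0:ℝ) ≤ (n:ℝ)-1-k))
    (sq_nonneg ((n:ℝ)-1-2*k))]

lemma sigma4_nonneg (n : ℕ) : 0 ≤ ∑ k ∈ range n, ((n:ℝ)-1-2*k)^4 :=
  Finset.sum_nonneg fun k _ => by positivity

/-- the real-coefficient linear representation of the Kendall score -/
lemma kendall_half {n : ℕ} (x : Fin n → Fin 2) :
    (kendallS x : ℝ)
      = (1/2) * ∑ k : Fin n, ((n:ℝ)-1-2*((k:ℕ):ℝ)) * epsR (x k) := by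
  have hz := kendall_linear x
  have hcast : (kendallS x : ℝ) = ∑ k : Fin n, ((n:ℝ)-1-2*((k:ℕ):ℝ)) * ((x k : ℕ) : ℝ) := by
    rw [hz]
    push_cast
    rfl
  have hc0 : ∑ k : Fin n, ((n:ℝ)-1-2*((k:ℕ):ℝ)) = 0 := by
    rw [Fin.sum_univ_eq_sum_range (fun k : ℕ => ((n:ℝ)-1-2*(k:ℝ)))]
    exact csum_zero n
  have expand : ∑ k : Fin n, ((n:ℝ)-1-2*((k:ℕ):ℝ)) * epsR (x k)
      = 2 * (∑ k : Fin n, ((n:ℝ)-1-2*((k:ℕ):ℝ)) * ((x k : ℕ) : ℝ))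
        - ∑ k : Fin n, ((n:ℝ)-1-2*((k:ℕ):ℝ)) := by
    rw [Finset.mul_sum, ← Finset.sum_sub_distrib]
    refine Finset.sum_congr rfl fun k _ => ?_
    simp only [epsR]
    ring
  rw [expand, hc0, hcast]
  ring

end Aux

/-- Binary uniform case: μ₄(n)/σ(n)⁴ → 3 as n → ∞, with σ²(n) = Var(S), μ₄(n) = E[S⁴]. -/
theorem kendall_kurtosis_limit :
    Filter.Tendsto (fun n : ℕ =>
      ((∑ x : Fin n → Fin 2, (kendallS x : ℝ) ^ 4) / 2 ^ n) /
        ((∑ x : Fin n → Fin 2, (kendallS x : ℝ) ^ 2) / 2 ^ n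
          - ((∑ x : Fin n → Fin 2, (kendallS x : ℝ)) / 2 ^ n) ^ 2) ^ 2)
      Filter.atTop (nhds 3) := by
  set s2 : ℕ → ℝ := fun n => ∑ k ∈ range n, ((n:ℝ)-1-2*k)^2 with hs2def
  set s4 : ℕ → ℝ := fun n => ∑ k ∈ range n, ((n:ℝ)-1-2*k)^4 with hs4def
  -- the auxiliary function
  have hzero : Filter.Tendsto (fun n : ℕ => 2 * s4 n / (s2 n)^2) Filter.atTop (nhds 0) := by
    apply squeeze_zero' (g := fun n : ℕ => 6 / (n:ℝ))
    · filter_upwards with n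
      have := sigma4_nonneg n
      positivity
    · filter_upwards [Filter.eventually_ge_atTop 2] with n hn
      have hn2 : (2:ℝ) ≤ (n:ℝ) := by exact_mod_cast hn
      have hs2 : s2 n = (n:ℝ)*((n:ℝ)^2-1)/3 := sigma2_eq n
      have hs2pos : 0 < s2 n := by rw [hs2]; nlinarith
      have h4le : s4 n ≤ ((n:ℝ)-1)^2 * s2 n := sigma4_le n
      rw [div_le_div_iff₀ (by positivity) (by positivity)]
      have h1 : 2 * s4 n * (n:ℝ) ≤ 2 * (((n:ℝ)-1)^2 * s2 n) * n := by nlinarith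
      refine h1.trans ?_
      rw [hs2]
      nlinarith [sq_nonneg ((n:ℝ)-1), sq_nonneg ((n:ℝ)*((n:ℝ)^2-1))]
    · exact tendsto_const_div_atTop_nhds_zero_nat 6
  have main : Filter.Tendsto (fun n : ℕ => 3 - 2 * s4 n / (s2 n)^2) Filter.atTop (nhds 3) := by
    simpa using (tendsto_const_nhds (x := (3:ℝ)) (f := Filter.atTop)).sub hzero
  refine Filter.Tendsto.congr' ?_ main
  filter_upwards [Filter.eventually_ge_atTop 2] with n hn
  have hn2 : (2:ℝ) ≤ (n:ℝ) := by exact_mod_cast hn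
  -- moment computations
  obtain ⟨h1, h2, h4⟩ := rad_moments n (fun k : Fin n => (n:ℝ)-1-2*((k:ℕ):ℝ))
  have hfin2 : (∑ k : Fin n, ((n:ℝ)-1-2*((k:ℕ):ℝ))^2) = s2 n := by
    rw [hs2def]
    exact Fin.sum_univ_eq_sum_range (fun k : ℕ => ((n:ℝ)-1-2*(k:ℝ))^2) n
  have hfin4 : (∑ k : Fin n, ((n:ℝ)-1-2*((k:ℕ):ℝ))^4) = s4 n := by
    rw [hs4def]
    exact Fin.sum_univ_eq_sum_range (fun k : ℕ => ((n:ℝ)-1-2*(k:ℝ))^4) n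
  have e1 : (∑ x : Fin n → Fin 2, (kendallS x : ℝ)) = 0 := by
    calc (∑ x : Fin n → Fin 2, (kendallS x : ℝ))
        = ∑ x : Fin n → Fin 2, (1/2) * ∑ k : Fin n, ((n:ℝ)-1-2*((k:ℕ):ℝ)) * epsR (x k) :=
          Finset.sum_congr rfl fun x _ => kendall_half x
      _ = (1/2) * ∑ x : Fin n → Fin 2, ∑ k : Fin n, ((n:ℝ)-1-2*((k:ℕ):ℝ)) * epsR (x k) := by
          rw [Finset.mul_sum]
      _ = 0 := by rw [h1]; ring
  have e2 : (∑ x : Fin n → Fin 2, (kendallS x : ℝ)^2) = 2^n * s2 n / 4 := by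
    calc (∑ x : Fin n → Fin 2, (kendallS x : ℝ)^2)
        = ∑ x : Fin n → Fin 2,
            (1/4) * (∑ k : Fin n, ((n:ℝ)-1-2*((k:ℕ):ℝ)) * epsR (x k))^2 :=
          Finset.sum_congr rfl fun x _ => by rw [kendall_half x]; ring
      _ = (1/4) * ∑ x : Fin n → Fin 2,
            (∑ k : Fin n, ((n:ℝ)-1-2*((k:ℕ):ℝ)) * epsR (x k))^2 := by rw [Finset.mul_sum]
      _ = 2^n * s2 n / 4 := by rw [h2, hfin2]; ring
  have e4 : (∑ x : Fin n → Fin 2, (kendallS x : ℝ)^4)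
      = 2^n * (3 * (s2 n)^2 - 2 * s4 n) / 16 := by
    calc (∑ x : Fin n → Fin 2, (kendallS x : ℝ)^4)
        = ∑ x : Fin n → Fin 2,
            (1/16) * (∑ k : Fin n, ((n:ℝ)-1-2*((k:ℕ):ℝ)) * epsR (x k))^4 :=
          Finset.sum_congr rfl fun x _ => by rw [kendall_half x]; ring
      _ = (1/16) * ∑ x : Fin n → Fin 2,
            (∑ k : Fin n, ((n:ℝ)-1-2*((k:ℕ):ℝ)) * epsR (x k))^4 := by rw [Finset.mul_sum]
      _ = 2^n * (3 * (s2 n)^2 - 2 * s4 n) / 16 := by rw [h4, hfin2, hfin4]; ring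
  have hs2pos : 0 < s2 n := by
    rw [show s2 n = (n:ℝ)*((n:ℝ)^2-1)/3 from sigma2_eq n]; nlinarith
  have hpow : (0:ℝ) < 2^n := by positivity
  rw [e1, e2, e4]
  field_simp
  ring
end

section
/- For biased binary sequences (P(x_k = 0) = p, P(x_k = 1) = q = 1-p, independent) with n = 2\nu+1 odd, the probability generating function of S equals \prod_{k=1}^{\nu} (pq x^{-2k} + p^2 + q^2 + pq x^{2k}). -/
open Finset

lemma zpow_sum' {α : Type*} {y : ℝ} (hy : y ≠ 0) (s : Finset α) (f : α → ℤ) :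
    y ^ (∑ i ∈ s, f i) = ∏ i ∈ s, y ^ f i := by
  classical
  induction s using Finset.cons_induction with
  | empty => simp
  | cons a s ha ih => rw [Finset.sum_cons, Finset.prod_cons, zpow_add₀ hy, ih]

lemma kendallS_binary {n : ℕ} (x : Fin n → Fin 2) :
    kendallS x = ∑ i : Fin n, (x i : ℤ) * ((n : ℤ) - 1 - 2 * (i : ℤ)) := by
  classical
  unfold kendallS
  rw [Finset.card_filter, Finset.card_filter]
  push_cast
  rw [← Finset.sum_sub_distrib]
  have h1 : ∀ p : Fin n × Fin n,
      ((if p.2 < p.1 ∧ x p.1 < x p.2 then (1:ℤ) else 0) -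
        (if p.2 < p.1 ∧ x p.2 < x p.1 then (1:ℤ) else 0)) =
      (if p.2 < p.1 then (x p.2 : ℤ) else 0) - (if p.2 < p.1 then (x p.1 : ℤ) else 0) := by
    intro p
    have ha := (x p.1).isLt
    have hb := (x p.2).isLt
    by_cases h : p.2 < p.1
    · simp only [h, true_and, if_true]
      rcases Fin.lt_or_le (x p.1) (x p.2) with h2 | h2
      · rw [if_pos h2, if_neg (not_lt.mpr h2.le)]
        rw [Fin.lt_def] at h2; omega
      · rw [if_neg (not_lt.mpr h2)]
        rcases lt_or_eq_of_le h2 with h3 | h3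
        · rw [if_pos h3]; rw [Fin.lt_def] at h3; omega
        · rw [if_neg (by simp [h3])]
          rw [Fin.le_def] at h2
          have := Fin.val_eq_val (x p.2) (x p.1)
          omega
    · simp [h]
  rw [Finset.sum_congr rfl fun p _ => h1 p, Finset.sum_sub_distrib]
  rw [Fintype.sum_prod_type, Fintype.sum_prod_type]
  have hIio : ∀ i : Fin n, (univ.filter (fun j : Fin n => j < i)) = Finset.Iio i := by
    intro i; ext j; simp
  have hIoi : ∀ j : Fin n, (univ.filter (fun i : Fin n => j < i)) = Finset.Ioi j := by
    intro j; ext i; simp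
  have e1 : ∑ i : Fin n, ∑ j : Fin n, (if j < i then (x j : ℤ) else 0)
      = ∑ j : Fin n, (x j : ℤ) * ((n : ℤ) - 1 - (j : ℤ)) := by
    rw [Finset.sum_comm]
    refine Finset.sum_congr rfl fun j _ => ?_
    rw [← Finset.sum_filter, hIoi, Finset.sum_const, Fin.card_Ioi, nsmul_eq_mul, mul_comm]
    congr 1
    have := j.isLt
    push_cast [Nat.cast_sub (by omega : (j:ℕ) ≤ n - 1), Nat.cast_sub (by omega : 1 ≤ n)]
    ring
  have e2 : ∑ i : Fin n, ∑ j : Fin n, (if j < i then (x i : ℤ) else 0)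
      = ∑ i : Fin n, (x i : ℤ) * (i : ℤ) := by
    refine Finset.sum_congr rfl fun i _ => ?_
    rw [← Finset.sum_filter, hIio, Finset.sum_const, Fin.card_Iio, nsmul_eq_mul, mul_comm]
  rw [e1, e2, ← Finset.sum_sub_distrib]
  refine Finset.sum_congr rfl fun i _ => ?_
  ring

lemma prod_center (p q y : ℝ) (hpq : p + q = 1) (hy : y ≠ 0) (ν : ℕ) :
    ∏ i ∈ Finset.range (2 * ν + 1), (p + q * y ^ (2 * (ν : ℤ) - 2 * (i : ℤ)))
      = ∏ k ∈ Finset.Icc 1 ν,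
          (p * q * y ^ (-(2 * (k : ℤ))) + p ^ 2 + q ^ 2 + p * q * y ^ (2 * (k : ℤ))) := by
  induction ν with
  | zero => simpa using hpq
  | succ ν ih =>
    have hrange : 2 * (ν + 1) + 1 = (2 * ν + 2) + 1 := by ring
    rw [hrange, Finset.prod_range_succ, Finset.prod_range_succ']
    have hmid : ∀ i : ℕ, (p + q * y ^ (2 * ((ν:ℤ) + 1) - 2 * ((i:ℤ) + 1)))
        = (p + q * y ^ (2 * (ν : ℤ) - 2 * (i : ℤ))) := by
      intro i; congr 2; ring
    have hIcc : Finset.Icc 1 (ν + 1) = insert (ν + 1) (Finset.Icc 1 ν) := by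
      ext m; simp only [Finset.mem_Icc, Finset.mem_insert]; omega
    rw [hIcc, Finset.prod_insert (by simp)]
    push_cast
    rw [Finset.prod_congr rfl fun i _ => hmid i, ih]
    have key : (p + q * y ^ (2 * ((ν:ℤ) + 1) - 2 * 0)) *
        (p + q * y ^ (2 * ((ν:ℤ) + 1) - 2 * ((2*ν+2 : ℕ):ℤ))) =
        (p * q * y ^ (-(2 * ((ν:ℤ)+1))) + p ^ 2 + q ^ 2 + p * q * y ^ (2 * ((ν:ℤ)+1))) := by
      have h1 : (2 * ((ν:ℤ) + 1) - 2 * 0) = 2 * ((ν:ℤ)+1) := by ring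
      have h2 : (2 * ((ν:ℤ) + 1) - 2 * ((2*ν+2 : ℕ):ℤ)) = -(2 * ((ν:ℤ)+1)) := by
        push_cast; ring
      rw [h1, h2]
      have h3 : y ^ (2 * ((ν:ℤ)+1)) * y ^ (-(2 * ((ν:ℤ)+1))) = 1 := by
        rw [← zpow_add₀ hy]; simp
      linear_combination (q^2) * h3
    push_cast at key ⊢
    rw [mul_assoc, key, mul_comm]

/-- Biased binary case, n = 2ν+1 odd: the PGF of S is ∏ₖ (pq x^{-2k} + p² + q² + pq x^{2k}). -/
theorem kendall_pgf_biased_odd (ν : ℕ) (p q : ℝ) (hp : 0 ≤ p) (hq : 0 ≤ q)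
    (hpq : p + q = 1) (y : ℝ) (hy : y ≠ 0) :
    ∑ x : Fin (2 * ν + 1) → Fin 2,
        (∏ k, if x k = 0 then p else q) * y ^ kendallS x
      = ∏ k ∈ Finset.Icc 1 ν,
          (p * q * y ^ (-(2 * (k : ℤ))) + p ^ 2 + q ^ 2 + p * q * y ^ (2 * (k : ℤ))) := by
  classical
  have step1 : ∀ x : Fin (2 * ν + 1) → Fin 2,
      (∏ k, if x k = 0 then p else q) * y ^ kendallS x
        = ∏ k : Fin (2 * ν + 1),
            ((if x k = 0 then p else q) * y ^ ((x k : ℤ) * ((2*ν+1 : ℤ) - 1 - 2 * (k : ℤ)))) := by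
    intro x
    rw [kendallS_binary, zpow_sum' hy, ← Finset.prod_mul_distrib]
    refine Finset.prod_congr rfl fun k _ => ?_
    push_cast
    ring_nf
  rw [Finset.sum_congr rfl fun x _ => step1 x]
  have hfac := Finset.prod_univ_sum (fun _ : Fin (2*ν+1) => (univ : Finset (Fin 2)))
    (fun k b => (if b = 0 then p else q) * y ^ ((b : ℤ) * ((2*ν+1 : ℤ) - 1 - 2 * (k : ℤ))))
  rw [Fintype.piFinset_univ] at hfac
  rw [← hfac]
  have step2 : ∀ k : Fin (2 * ν + 1),
      (∑ b : Fin 2, (if b = 0 then p else q) * y ^ ((b : ℤ) * ((2*ν+1 : ℤ) - 1 - 2 * (k : ℤ))))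
        = p + q * y ^ (2 * (ν : ℤ) - 2 * (k : ℤ)) := by
    intro k
    rw [Fin.sum_univ_two]
    have h0 : ((0 : Fin 2) : ℤ) = 0 := rfl
    have h1 : ((1 : Fin 2) : ℤ) = 1 := rfl
    rw [if_pos rfl, if_neg (by decide : (1 : Fin 2) ≠ 0), h0, h1, zero_mul, zpow_zero,
      mul_one, one_mul]
    congr 2
    push_cast
    ring
  rw [Finset.prod_congr rfl fun k _ => step2 k]
  rw [← prod_center p q y hpq hy ν]
  exact (Finset.prod_range fun i => p + q * y ^ (2 * (ν:ℤ) - 2 * (i:ℤ))).symm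
end
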